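/- Let n ≥ 2 and let F be an n×n real column-stochastic matrix with block form F = [[F₁₁, 0],[cᵀ, 1]], where F₁₁ is a nonnegative (n−1)×(n−1) matrix, c ∈ ℝ^{n−1} is nonnegative with c ≠ 0, the column-stochasticity condition reads c_j + ∑_i (F₁₁)_{ij} = 1 for each j, and F₁₁ is irreducible. Then I − F₁₁ is invertible and F^k converges entrywise as k → ∞ to the matrix [[0, 0],[cᵀ (I − F₁₁)^{−1}, 1]], i.e., the upper-left block tends to the zero matrix, the upper-right block is zero, the lower-left row tends to cᵀ (I − F₁₁)^{−1}, and the (n,n) entry is 1. -/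

import Mathlib

open Matrix Finset Filter Topology

/-- A nonnegative square matrix is irreducible: every entry of some power is positive. -/
def MatrixIrreducible {m : Type*} [Fintype m] [DecidableEq m] (A : Matrix m m ℝ) : Prop :=
  ∀ i j, ∃ k : ℕ, 1 ≤ k ∧ 0 < (A ^ k) i j


lemma pow_entry_tendsto_zero (m : ℕ) (hm : 1 ≤ m)
    (A : Matrix (Fin m) (Fin m) ℝ) (c : Fin m → ℝ)
    (hA : ∀ i j, 0 ≤ A i j) (hc : ∀ j, 0 ≤ c j) (hcne : c ≠ 0)
    (hcol : ∀ j, c j + ∑ i, A i j = 1)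
    (hirr : ∀ i j, ∃ k : ℕ, 1 ≤ k ∧ 0 < (A ^ k) i j) :
    ∀ i j, Filter.Tendsto (fun k : ℕ => (A ^ k) i j) Filter.atTop (nhds 0) := by
  have hne : Nonempty (Fin m) := ⟨⟨0, hm⟩⟩
  have hApow : ∀ (k : ℕ) i j, 0 ≤ (A ^ k) i j := by
    intro k
    induction k with
    | zero => intro i j; by_cases h : i = j <;> simp [Matrix.one_apply, h]
    | succ k ih =>
      intro i j
      rw [pow_succ, Matrix.mul_apply]
      exact Finset.sum_nonneg fun p _ => mul_nonneg (ih i p) (hA p j)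
  set s : ℕ → Fin m → ℝ := fun k j => ∑ i, (A ^ k) i j with hs
  have hs0 : ∀ j, s 0 j = 1 := by
    intro j; simp [hs, Matrix.one_apply]
  have hstep : ∀ k j, s (k + 1) j = s k j - ∑ p, c p * (A ^ k) p j := by
    intro k j
    have : s (k + 1) j = ∑ i, ∑ p, A i p * (A ^ k) p j := by
      simp only [hs, pow_succ', Matrix.mul_apply]
    rw [this, Finset.sum_comm]
    have : ∀ p, ∑ i, A i p * (A ^ k) p j = (1 - c p) * (A ^ k) p j := by
      intro p
      rw [← Finset.sum_mul]
      congr 1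
      have := hcol p; linarith
    simp only [this, sub_mul, one_mul, Finset.sum_sub_distrib]
    rfl
  have hmono : ∀ j, Antitone fun k => s k j := by
    intro j
    apply antitone_nat_of_succ_le
    intro k
    rw [hstep k j]
    have : 0 ≤ ∑ p, c p * (A ^ k) p j :=
      Finset.sum_nonneg fun p _ => mul_nonneg (hc p) (hApow k p j)
    linarith
  have hle1 : ∀ k j, s k j ≤ 1 := fun k j => (hs0 j) ▸ hmono j (Nat.zero_le k)
  have hsnn : ∀ k j, 0 ≤ s k j := fun k j =>
    Finset.sum_nonneg fun i _ => hApow k i j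
  obtain ⟨j0, hj0⟩ : ∃ j0, 0 < c j0 := by
    by_contra h
    push_neg at h
    exact hcne (funext fun j => le_antisymm (h j) (hc j))
  have hdrop : ∀ j, ∃ K, s K j < 1 := by
    intro j
    obtain ⟨k, hk1, hkpos⟩ := hirr j0 j
    refine ⟨k + 1, ?_⟩
    rw [hstep k j]
    have h1 : c j0 * (A ^ k) j0 j ≤ ∑ p, c p * (A ^ k) p j :=
      Finset.single_le_sum (fun p _ => mul_nonneg (hc p) (hApow k p j))
        (Finset.mem_univ j0)
    have h2 : 0 < c j0 * (A ^ k) j0 j := mul_pos hj0 hkpos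
    have := hle1 k j
    linarith
  choose K hK using hdrop
  set N : ℕ := Finset.univ.sup K + 1 with hN
  have hNpos : 0 < N := Nat.succ_pos _
  have hsN : ∀ j, s N j < 1 := by
    intro j
    have h1 : K j ≤ N := le_trans (Finset.le_sup (Finset.mem_univ j)) (Nat.le_succ _)
    exact lt_of_le_of_lt (hmono j h1) (hK j)
  set r : ℝ := Finset.univ.sup' Finset.univ_nonempty (s N) with hr
  have hr1 : r < 1 := (Finset.sup'_lt_iff _).2 fun j _ => hsN j
  have hr0 : 0 ≤ r := le_trans (hsnn N j0) (Finset.le_sup' _ (Finset.mem_univ j0))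
  have hrs : ∀ j, s N j ≤ r := fun j => Finset.le_sup' _ (Finset.mem_univ j)
  have hmul : ∀ k j, s (N + k) j ≤ r * s k j := by
    intro k j
    have h1 : s (N + k) j = ∑ p, s N p * (A ^ k) p j := by
      simp only [hs, pow_add, Matrix.mul_apply]
      rw [Finset.sum_comm]
      simp only [Finset.sum_mul]
    rw [h1]
    calc ∑ p, s N p * (A ^ k) p j ≤ ∑ p, r * (A ^ k) p j :=
          Finset.sum_le_sum fun p _ =>
            mul_le_mul_of_nonneg_right (hrs p) (hApow k p j)
      _ = r * s k j := by rw [← Finset.mul_sum]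
  have hq : ∀ q j, s (q * N) j ≤ r ^ q := by
    intro q
    induction q with
    | zero => intro j; simp [hs0 j]
    | succ q ih =>
      intro j
      have h1 : (q + 1) * N = N + q * N := by ring
      rw [h1]
      calc s (N + q * N) j ≤ r * s (q * N) j := hmul _ j
        _ ≤ r * r ^ q := mul_le_mul_of_nonneg_left (ih j) hr0
        _ = r ^ (q + 1) := by ring
  have hbound : ∀ k j, s k j ≤ r ^ (k / N) := by
    intro k j
    exact le_trans (hmono j (Nat.div_mul_le_self k N)) (hq (k / N) j)
  have hdiv : Tendsto (fun k : ℕ => k / N) atTop atTop := by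
    apply tendsto_atTop_atTop.2
    intro b
    exact ⟨b * N, fun k hk => (Nat.le_div_iff_mul_le hNpos).2 hk⟩
  have hrpow : Tendsto (fun k : ℕ => r ^ (k / N)) atTop (nhds 0) :=
    (tendsto_pow_atTop_nhds_zero_of_lt_one hr0 hr1).comp hdiv
  have hs_tend : ∀ j, Tendsto (fun k => s k j) atTop (nhds 0) := fun j =>
    squeeze_zero (fun k => hsnn k j) (fun k => hbound k j) hrpow
  intro i j
  refine squeeze_zero (fun k => hApow k i j) (fun k => ?_) (hs_tend j)
  exact Finset.single_le_sum (fun p _ => hApow k p j) (Finset.mem_univ i)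

/-- If the last agent is a pure cash hoarder (`F = [[A,0],[cᵀ,1]]`,
`c ≠ 0`) and the rest of the economy is strongly connected (`A` irreducible),
then `I - A` is invertible and `F^k → [[0,0],[cᵀ(I-A)⁻¹,1]]` entrywise. -/
theorem cash_hoarder_limit (m : ℕ) (hm : 1 ≤ m)
    (A : Matrix (Fin m) (Fin m) ℝ) (c : Fin m → ℝ)
    (hA : ∀ i j, 0 ≤ A i j) (hc : ∀ j, 0 ≤ c j) (hcne : c ≠ 0)
    (hcol : ∀ j, c j + ∑ i, A i j = 1)
    (hirr : MatrixIrreducible A)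
    (F : Matrix (Fin m ⊕ Unit) (Fin m ⊕ Unit) ℝ)
    (hF : F = Matrix.fromBlocks A 0 (Matrix.replicateRow Unit c) 1) :
    IsUnit (1 - A) ∧
      Filter.Tendsto (fun k : ℕ => F ^ k) Filter.atTop
        (nhds (Matrix.fromBlocks 0 0 (Matrix.replicateRow Unit c * (1 - A)⁻¹) 1)) := by
  have hzero := pow_entry_tendsto_zero m hm A c hA hc hcne hcol hirr
  -- invertibility of 1 - A
  have hdet : IsUnit (1 - A).det := by
    rw [isUnit_iff_ne_zero]
    intro h0
    obtain ⟨v, hv, hvA⟩ := Matrix.exists_mulVec_eq_zero_iff.2 h0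
    have hAv : A *ᵥ v = v := by
      rw [Matrix.sub_mulVec, Matrix.one_mulVec, sub_eq_zero] at hvA
      exact hvA.symm
    have hk : ∀ k : ℕ, (A ^ k) *ᵥ v = v := by
      intro k
      induction k with
      | zero => simp [Matrix.one_mulVec]
      | succ k ih => rw [pow_succ', ← Matrix.mulVec_mulVec, ih, hAv]
    apply hv
    funext i
    have h1 : Tendsto (fun k : ℕ => ((A ^ k) *ᵥ v) i) atTop (nhds 0) := by
      have : ∀ k : ℕ, ((A ^ k) *ᵥ v) i = ∑ j, (A ^ k) i j * v j := by
        intro k; rfl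
      simp only [this]
      have := tendsto_finset_sum (f := fun j (k : ℕ) => (A ^ k) i j * v j)
        (a := fun j => 0) Finset.univ
        (fun j _ => by simpa using (hzero i j).mul_const (v j))
      simpa using this
    have h2 : Tendsto (fun _ : ℕ => v i) atTop (nhds (v i)) := tendsto_const_nhds
    have h3 : (fun k : ℕ => ((A ^ k) *ᵥ v) i) = fun _ : ℕ => v i := by
      funext k; rw [hk k]
    rw [h3] at h1
    exact tendsto_nhds_unique h2 h1
  have hunit : IsUnit (1 - A) := (Matrix.isUnit_iff_isUnit_det _).2 hdet
  refine ⟨hunit, ?_⟩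
  set Q : Matrix (Fin m) (Fin m) ℝ := (1 - A)⁻¹ with hQdef
  have hQ : (1 - A) * Q = 1 := Matrix.mul_nonsing_inv _ hdet
  set S : ℕ → Matrix (Fin m) (Fin m) ℝ := fun k => ∑ i ∈ Finset.range k, A ^ i with hSdef
  have hgeom : ∀ k, S k * (1 - A) = 1 - A ^ k := by
    intro k
    have h := geom_sum_mul A k
    have : S k * (1 - A) = -(S k * (A - 1)) := by
      rw [← mul_neg, neg_sub]
    rw [this, h, neg_sub]
  have hS : ∀ k, S k = (1 - A ^ k) * Q := by
    intro k
    calc S k = S k * ((1 - A) * Q) := by rw [hQ, mul_one]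
      _ = S k * (1 - A) * Q := by rw [mul_assoc]
      _ = (1 - A ^ k) * Q := by rw [hgeom]
  -- formula for F ^ k
  have hFk : ∀ k : ℕ, F ^ k =
      Matrix.fromBlocks (A ^ k) 0 (Matrix.replicateRow Unit c * S k) 1 := by
    intro k
    induction k with
    | zero => simp [hSdef, Matrix.fromBlocks_one]
    | succ k ih =>
      have hSucc : S (k + 1) = S k * A + 1 := by
        simp only [hSdef, Finset.sum_range_succ', pow_succ, ← Finset.sum_mul, pow_zero]
      rw [pow_succ, ih, hF, Matrix.fromBlocks_multiply]
      simp only [Matrix.zero_mul, Matrix.mul_zero, add_zero, zero_add, one_mul,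
        Matrix.one_mul, Matrix.mul_one, hSucc, Matrix.mul_add, Matrix.mul_assoc,
        ← pow_succ]
  simp only [hFk]
  apply tendsto_pi_nhds.2
  intro i
  rw [tendsto_pi_nhds]
  intro j
  have hSentry : ∀ p q, Tendsto (fun k : ℕ => (S k) p q) atTop (nhds (Q p q)) := by
    intro p q
    have h1 : ∀ k : ℕ, (S k) p q = Q p q - ∑ t, (A ^ k) p t * Q t q := by
      intro k
      rw [hS k, sub_mul, one_mul, Matrix.sub_apply, Matrix.mul_apply]
    simp only [h1]
    have h2 : Tendsto (fun k : ℕ => ∑ t, (A ^ k) p t * Q t q) atTop (nhds 0) := by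
      have := tendsto_finset_sum (f := fun t (k : ℕ) => (A ^ k) p t * Q t q)
        (a := fun t => 0) Finset.univ (fun t _ => by simpa using (hzero p t).mul_const (Q t q))
      simpa using this
    simpa using tendsto_const_nhds.sub h2
  cases i with
  | inl i =>
    cases j with
    | inl j =>
      simpa [Matrix.fromBlocks] using hzero i j
    | inr u => simp [Matrix.fromBlocks]
  | inr u =>
    cases j with
    | inl j =>
      simp only [Matrix.fromBlocks_apply₂₁]
      have h1 : ∀ k : ℕ, (Matrix.replicateRow Unit c * S k) u j = ∑ p, c p * (S k) p j := by
        intro k; rw [Matrix.mul_apply]; simp [Matrix.replicateRow_apply]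
      have h2 : (Matrix.replicateRow Unit c * Q) u j = ∑ p, c p * Q p j := by
        rw [Matrix.mul_apply]; simp [Matrix.replicateRow_apply]
      simp only [h1, h2]
      exact tendsto_finset_sum _ fun p _ => (hSentry p j).const_mul (c p)
    | inr u' => simp [Matrix.fromBlocks]
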